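/- For integers n ≥ 4, g = n(n+1), a = (n²-1)(g-1), and L² = 2g-2, one has (a-1)(2g-2) - 2 + 2 > a(2g-2)/n; that is, γ_C + 2 > μ(E|_C), contradicting the consequence (*) of Mercat's conjecture. -/
import Mathlib


/-- For `n ≥ 4`, `g = n(n+1)`, `a = (n²-1)(g-1)`, `L² = 2g-2`:
`γ_C + 2 = (a-1)(2g-2) > a(2g-2)/n = μ(E|_C)`, contradicting Mercat's conjecture. -/
theorem stmt8 (n g a : ℤ) (hn : 4 ≤ n) (hg : g = n * (n + 1))
    (ha : a = (n ^ 2 - 1) * (g - 1)) :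
    ((a : ℚ) - 1) * (2 * g - 2) - 2 + 2 > a * (2 * g - 2) / n := by
  subst hg ha
  have hn' : (4 : ℚ) ≤ (n : ℚ) := by exact_mod_cast hn
  have hpos : (0 : ℚ) < (n : ℚ) := by linarith
  rw [gt_iff_lt, div_lt_iff₀ hpos]
  push_cast
  have h1 : (0:ℚ) < 2 * ((n:ℚ) * (n + 1)) - 2 := by nlinarith
  have h2 : (0:ℚ) < ((n:ℚ) - 1) * (((n:ℚ)^2 - 1) * ((n:ℚ) * (n + 1) - 1)) - n := by
    nlinarith [sq_nonneg ((n:ℚ)), sq_nonneg ((n:ℚ)^2 - 1)]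
  nlinarith [mul_pos h1 h2]
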